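/- Let u be an aperiodic uniformly recurrent infinite word and w a factor of u. Then there exists a word s such that w·s is a right special factor of u, w·s' is not right special for any proper prefix s' of s, and the set of return words of w in u equals the set of return words of w·s in u; consequently the derived words d_u(w) and d_u(ws) coincide. -/

import Mathlib

/-- The word `w` occurs in the infinite word `u` at position `i`. -/
def FactorAt {A : Type*} (u : ℕ → A) (w : List A) (i : ℕ) : Prop :=
  w = (List.range w.length).map fun j => u (i + j)

/-- `w` is a factor of the infinite word `u`. -/
def IsFactor {A : Type*} (u : ℕ → A) (w : List A) : Prop :=
  ∃ i, FactorAt u w i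

/-- `u` is uniformly recurrent: every factor occurs in every window of some
fixed length (hence infinitely often with bounded gaps). -/
def UniformlyRecurrent {A : Type*} (u : ℕ → A) : Prop :=
  ∀ w, IsFactor u w → ∃ R, ∀ i, ∃ j, i ≤ j ∧ j < i + R ∧ FactorAt u w j

/-- `u` is aperiodic: not eventually periodic. -/
def Aperiodic {A : Type*} (u : ℕ → A) : Prop :=
  ¬ ∃ N p, 0 < p ∧ ∀ n, N ≤ n → u (n + p) = u n

/-- `r` is a return word of `w` in `u`: at some occurrence, `r w` is a factor of
`u` in which `w` occurs exactly twice, as a prefix and as a suffix. -/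
def ReturnWord {A : Type*} (u : ℕ → A) (w r : List A) : Prop :=
  r ≠ [] ∧ ∃ i, FactorAt u r i ∧ FactorAt u w i ∧ FactorAt u w (i + r.length) ∧
    ∀ j, i < j → j < i + r.length → ¬ FactorAt u w j

/-- `v` is a right special factor of `u`. -/
def RightSpecial {A : Type*} (u : ℕ → A) (v : List A) : Prop :=
  ∃ a b : A, a ≠ b ∧ IsFactor u (v ++ [a]) ∧ IsFactor u (v ++ [b])

/-- `v` is a left special factor of `u`. -/
def LeftSpecial {A : Type*} (u : ℕ → A) (v : List A) : Prop :=
  ∃ a b : A, a ≠ b ∧ IsFactor u (a :: v) ∧ IsFactor u (b :: v)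

section Aux

variable {A : Type*} {u : ℕ → A}

lemma factorAt_iff {w : List A} {i : ℕ} :
    FactorAt u w i ↔ ∀ j (hj : j < w.length), w[j] = u (i + j) := by
  constructor
  · intro h j hj
    have h2 : w[j]? = some (u (i + j)) := by
      conv_lhs => rw [h]
      simp [List.getElem?_map, List.getElem?_range, hj]
    rw [List.getElem?_eq_getElem hj] at h2
    exact Option.some.inj h2
  · intro h
    apply List.ext_getElem (by simp)
    intro j h1 h2
    simpa using h j h1

lemma FactorAt.prefix {w v : List A} {i : ℕ} (h : FactorAt u (w ++ v) i) :
    FactorAt u w i := by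
  rw [factorAt_iff] at h ⊢
  intro j hj
  have h2 := h j (by simp; omega)
  rwa [List.getElem_append_left hj] at h2

lemma FactorAt.extend {x : List A} {i : ℕ} (h : FactorAt u x i) :
    FactorAt u (x ++ [u (i + x.length)]) i := by
  rw [factorAt_iff] at h ⊢
  intro j hj
  simp only [List.length_append, List.length_singleton] at hj
  by_cases hjx : j < x.length
  · rw [List.getElem_append_left hjx]
    exact h j hjx
  · have hj' : j = x.length := by omega
    subst hj'
    simp

end Aux

/-- For any factor `w` of an aperiodic uniformly recurrent word `u` there is a
word `s` such that `ws` is right special, `ws'` is not right special for any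
proper prefix `s'` of `s`, the return words of `w` and of `ws` coincide, and
the occurrences of `w` and of `ws` coincide (hence the derived words
`d_u(w)` and `d_u(ws)` coincide). -/
theorem right_special_extension {A : Type*} [Fintype A] (u : ℕ → A)
    (hap : Aperiodic u) (hur : UniformlyRecurrent u)
    (w : List A) (hw : IsFactor u w) :
    ∃ s : List A, RightSpecial u (w ++ s) ∧
      (∀ s', s' <+: s → s' ≠ s → ¬ RightSpecial u (w ++ s')) ∧
      (∀ r, ReturnWord u w r ↔ ReturnWord u (w ++ s) r) ∧
      (∀ i, FactorAt u w i ↔ FactorAt u (w ++ s) i) := by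
  classical
  obtain ⟨i0, hi0⟩ := hw
  let t : ℕ → A := fun k => u (i0 + w.length + k)
  let v : ℕ → List A := fun n => w ++ (List.range n).map t
  have hvlen : ∀ n, (v n).length = w.length + n := by intro n; simp [v]
  have hv0 : ∀ i, FactorAt u w i → FactorAt u (v 0) i := by
    intro i h; simpa [v] using h
  have hvsucc : ∀ n, v (n + 1) = v n ++ [t n] := by
    intro n; simp [v, List.range_succ]
  have hvi0 : ∀ n, FactorAt u (v n) i0 := by
    intro n
    rw [factorAt_iff]
    intro j hj
    rw [hvlen] at hj
    by_cases hjw : j < w.length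
    · show (w ++ (List.range n).map t)[j]'_ = u (i0 + j)
      rw [List.getElem_append_left hjw]
      exact factorAt_iff.mp hi0 j hjw
    · show (w ++ (List.range n).map t)[j]'_ = u (i0 + j)
      rw [List.getElem_append_right (by omega)]
      simp only [List.getElem_map, List.getElem_range]
      show u (i0 + w.length + (j - w.length)) = u (i0 + j)
      congr 1
      omega
  have hprop : ∀ n, ¬ RightSpecial u (v n) →
      ∀ i, FactorAt u (v n) i → FactorAt u (v (n + 1)) i := by
    intro n hn i hi
    have h1 := hi.extend
    have h2 := (hvi0 n).extend
    have heq : u (i + (v n).length) = u (i0 + (v n).length) := by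
      by_contra hne
      exact hn ⟨_, _, hne, ⟨i, h1⟩, ⟨i0, h2⟩⟩
    rw [hvsucc]
    have ht : t n = u (i + (v n).length) := by
      rw [heq, hvlen]
      show u (i0 + w.length + n) = u (i0 + (w.length + n))
      congr 1
      omega
    rw [ht]
    exact h1
  have hfor : ∀ n, (∀ k, k < n → ¬ RightSpecial u (v k)) →
      ∀ i, FactorAt u w i → FactorAt u (v n) i := by
    intro n
    induction n with
    | zero => intro _ i h; exact hv0 i h
    | succ m ih =>
      intro hk i h
      exact hprop m (hk m (by omega)) i (ih (fun k hk' => hk k (by omega)) i h)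
  have hexists : ∃ n, RightSpecial u (v n) := by
    by_contra hno
    push_neg at hno
    obtain ⟨R, hR⟩ := hur w ⟨i0, hi0⟩
    obtain ⟨j, hj1, hj2, hj3⟩ := hR (i0 + 1)
    have hall : ∀ i, FactorAt u w i → ∀ m, u (i + m) = u (i0 + m) := by
      intro i hi m
      have h1 := factorAt_iff.mp (hfor (m + 1) (fun k _ => hno k) i hi) m
        (by rw [hvlen]; omega)
      have h2 := factorAt_iff.mp (hvi0 (m + 1)) m (by rw [hvlen]; omega)
      exact h1.symm.trans h2
    apply hap
    refine ⟨i0, j - i0, by omega, ?_⟩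
    intro n hn
    have key := hall j hj3 (n - i0)
    have e1 : n + (j - i0) = j + (n - i0) := by omega
    have e2 : i0 + (n - i0) = n := by omega
    rw [e1, key, e2]
  let n := Nat.find hexists
  have hn : RightSpecial u (v n) := Nat.find_spec hexists
  have hmin : ∀ k, k < n → ¬ RightSpecial u (v k) := fun k hk => Nat.find_min hexists hk
  have hocc : ∀ i, FactorAt u w i ↔ FactorAt u (v n) i := by
    intro i
    constructor
    · exact hfor n hmin i
    · intro h
      exact FactorAt.prefix (w := w) (v := (List.range n).map t) h
  refine ⟨(List.range n).map t, hn, ?_, ?_, hocc⟩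
  · intro s' hp hne
    have hslen : ((List.range n).map t).length = n := by simp
    have hlen : s'.length < n := by
      have h1 := hp.length_le
      rw [hslen] at h1
      rcases eq_or_lt_of_le h1 with h | h
      · exact absurd (hp.eq_of_length (by rw [hslen, h])) hne
      · exact h
    have hs' : w ++ s' = v s'.length := by
      have htake : s' = ((List.range n).map t).take s'.length := by
        rw [List.prefix_iff_eq_take] at hp
        exact hp
      show w ++ s' = w ++ (List.range s'.length).map t
      congr 1
      conv_lhs => rw [htake]
      rw [← List.map_take, List.take_range, Nat.min_eq_left hlen.le]
    rw [hs']
    exact hmin s'.length hlen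
  · intro r
    unfold ReturnWord
    simp only [hocc]
    exact Iff.rfl
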